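/- Let R be a local ring with central element s. A matrix A ∈ M₂(R;s) is strongly clean if and only if A is a unit, or I₂ - A is a unit, or A is similar to a diagonal matrix diag(a,b) for some a, b ∈ R. -/

import Mathlib

/-- The formal matrix ring `M₂(R;s)`: 2×2 matrices over `R` recorded by their four
entries, with the twisted multiplication
`[[a,b],[c,d]]·[[a',b'],[c',d']] = [[aa'+s²bc', ab'+bd'],[ca'+dc', s²cb'+dd']]`. -/
@[ext]
structure FM (R : Type*) (s : R) : Type _ where
  a : R
  b : R
  c : R
  d : R

namespace FM

variable {R : Type*} [Ring R] {s : R}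

instance : Zero (FM R s) := ⟨⟨0, 0, 0, 0⟩⟩
instance : One (FM R s) := ⟨⟨1, 0, 0, 1⟩⟩
instance : Add (FM R s) := ⟨fun x y => ⟨x.a + y.a, x.b + y.b, x.c + y.c, x.d + y.d⟩⟩
instance : Neg (FM R s) := ⟨fun x => ⟨-x.a, -x.b, -x.c, -x.d⟩⟩
instance : Mul (FM R s) :=
  ⟨fun x y => ⟨x.a * y.a + s * s * (x.b * y.c), x.a * y.b + x.b * y.d,
    x.c * y.a + x.d * y.c, s * s * (x.c * y.b) + x.d * y.d⟩⟩

@[simp] lemma zero_a : (0 : FM R s).a = 0 := rfl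
@[simp] lemma zero_b : (0 : FM R s).b = 0 := rfl
@[simp] lemma zero_c : (0 : FM R s).c = 0 := rfl
@[simp] lemma zero_d : (0 : FM R s).d = 0 := rfl
@[simp] lemma one_a : (1 : FM R s).a = 1 := rfl
@[simp] lemma one_b : (1 : FM R s).b = 0 := rfl
@[simp] lemma one_c : (1 : FM R s).c = 0 := rfl
@[simp] lemma one_d : (1 : FM R s).d = 1 := rfl
@[simp] lemma add_a (x y : FM R s) : (x + y).a = x.a + y.a := rfl
@[simp] lemma add_b (x y : FM R s) : (x + y).b = x.b + y.b := rfl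
@[simp] lemma add_c (x y : FM R s) : (x + y).c = x.c + y.c := rfl
@[simp] lemma add_d (x y : FM R s) : (x + y).d = x.d + y.d := rfl
@[simp] lemma neg_a (x : FM R s) : (-x).a = -x.a := rfl
@[simp] lemma neg_b (x : FM R s) : (-x).b = -x.b := rfl
@[simp] lemma neg_c (x : FM R s) : (-x).c = -x.c := rfl
@[simp] lemma neg_d (x : FM R s) : (-x).d = -x.d := rfl
@[simp] lemma mul_a (x y : FM R s) : (x * y).a = x.a * y.a + s * s * (x.b * y.c) := rfl
@[simp] lemma mul_b (x y : FM R s) : (x * y).b = x.a * y.b + x.b * y.d := rfl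
@[simp] lemma mul_c (x y : FM R s) : (x * y).c = x.c * y.a + x.d * y.c := rfl
@[simp] lemma mul_d (x y : FM R s) : (x * y).d = s * s * (x.c * y.b) + x.d * y.d := rfl

instance : AddCommGroup (FM R s) where
  add_assoc x y z := by ext <;> simp [add_assoc]
  zero_add x := by ext <;> simp
  add_zero x := by ext <;> simp
  add_comm x y := by ext <;> simp [add_comm]
  neg_add_cancel x := by ext <;> simp
  nsmul := nsmulRec
  zsmul := zsmulRec

/-- When `s` is central in `R`, `M₂(R;s)` is a ring. -/
instance [hs : Fact (∀ x : R, s * x = x * s)] : Ring (FM R s) where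
  __ := (inferInstance : AddCommGroup (FM R s))
  mul := (· * ·)
  one := 1
  mul_assoc x y z := by
    have hc : ∀ u v : R, u * (s * v) = s * (u * v) := fun u v => by
      rw [← mul_assoc, ← hs.out u, mul_assoc]
    ext <;> simp only [mul_a, mul_b, mul_c, mul_d, mul_add, add_mul, mul_assoc, hc] <;> abel
  one_mul x := by ext <;> simp
  mul_one x := by ext <;> simp
  left_distrib x y z := by ext <;> simp [mul_add, add_mul] <;> abel
  right_distrib x y z := by ext <;> simp [mul_add, add_mul] <;> abel
  zero_mul x := by ext <;> simp
  mul_zero x := by ext <;> simp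

/-- In a commutative ring every element is central. -/
instance (priority := 100) {R : Type*} [CommRing R] (s : R) : Fact (∀ x : R, s * x = x * s) :=
  ⟨fun x => mul_comm s x⟩

end FM

/-- An element is strongly J-clean if it is the sum of an idempotent and an element of
the Jacobson radical which commute. -/
def IsStronglyJClean {A : Type*} [Ring A] (x : A) : Prop :=
  ∃ e : A, IsIdempotentElem e ∧ x * e = e * x ∧ x - e ∈ (⊥ : Ideal A).jacobson

/-- An element is strongly clean if it is the sum of an idempotent and a unit
which commute. -/
def IsStronglyClean {A : Type*} [Ring A] (x : A) : Prop :=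
  ∃ e : A, IsIdempotentElem e ∧ x * e = e * x ∧ IsUnit (x - e)

/-- An element is strongly nil clean if it is the sum of an idempotent and a nilpotent
which commute. -/
def IsStronglyNilClean {A : Type*} [Ring A] (x : A) : Prop :=
  ∃ e : A, IsIdempotentElem e ∧ x * e = e * x ∧ IsNilpotent (x - e)

section LocalLemmas

variable {R : Type*} [Ring R] [IsLocalRing R]

lemma lr_or (a : R) : IsUnit a ∨ IsUnit (1 - a) :=
  IsLocalRing.isUnit_or_isUnit_of_add_one (by abel)

lemma lr_idem {e : R} (h : e * e = e) : e = 0 ∨ e = 1 := by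
  rcases lr_or e with hu | hu
  · exact Or.inr (hu.mul_left_cancel (by rw [h, mul_one]))
  · refine Or.inl (hu.mul_right_cancel ?_)
    rw [mul_one_sub, h, sub_self, zero_mul]

lemma lr_comm_inv {a b : R} (h : a * b = 1) : b * a = 1 := by
  have hi : (b * a) * (b * a) = b * a := by
    rw [mul_assoc, ← mul_assoc a, h, one_mul]
  rcases lr_idem hi with h0 | h1
  · exfalso
    have hb : b = 0 := by
      have h2 : b * (a * b) = b := by rw [h, mul_one]
      rw [← mul_assoc, h0, zero_mul] at h2
      exact h2.symm
    exact one_ne_zero (by rw [← h, hb, mul_zero])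
  · exact h1

lemma lr_unit_of_mul_one {a b : R} (h : a * b = 1) : IsUnit a :=
  ⟨⟨a, b, h, lr_comm_inv h⟩, rfl⟩

lemma lr_isUnit_left {a b : R} (h : IsUnit (a * b)) : IsUnit a := by
  obtain ⟨u, hu⟩ := h
  exact lr_unit_of_mul_one (show a * (b * ↑u⁻¹) = 1 by
    rw [← mul_assoc, ← hu, Units.mul_inv])

lemma lr_isUnit_right {a b : R} (h : IsUnit (a * b)) : IsUnit b := by
  obtain ⟨u, hu⟩ := h
  have h2 : (↑u⁻¹ * a) * b = 1 := by rw [mul_assoc, ← hu, Units.inv_mul]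
  exact lr_unit_of_mul_one (lr_comm_inv h2)

lemma lr_add {a b : R} (ha : ¬IsUnit a) (hb : ¬IsUnit b) : ¬IsUnit (a + b) := by
  intro h
  obtain ⟨u, hu⟩ := h
  have h1 : ↑u⁻¹ * a + ↑u⁻¹ * b = 1 := by rw [← mul_add, ← hu, Units.inv_mul]
  rcases IsLocalRing.isUnit_or_isUnit_of_add_one h1 with h2 | h2
  exacts [ha (lr_isUnit_right h2), hb (lr_isUnit_right h2)]

end LocalLemmas

namespace FM

variable {R : Type*} [Ring R] {s : R} [hs : Fact (∀ x : R, s * x = x * s)]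

@[simp] lemma sub_a (x y : FM R s) : (x - y).a = x.a - y.a := by
  rw [sub_eq_add_neg, add_a, neg_a, ← sub_eq_add_neg]
@[simp] lemma sub_b (x y : FM R s) : (x - y).b = x.b - y.b := by
  rw [sub_eq_add_neg, add_b, neg_b, ← sub_eq_add_neg]
@[simp] lemma sub_c (x y : FM R s) : (x - y).c = x.c - y.c := by
  rw [sub_eq_add_neg, add_c, neg_c, ← sub_eq_add_neg]
@[simp] lemma sub_d (x y : FM R s) : (x - y).d = x.d - y.d := by
  rw [sub_eq_add_neg, add_d, neg_d, ← sub_eq_add_neg]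

lemma hsx (x : R) : s * s * x = x * (s * s) := by
  rw [mul_assoc, hs.out x, ← mul_assoc, hs.out x, mul_assoc]

lemma hmid (x y : R) : s * s * (x * y) = x * (s * s * y) := by
  rw [← mul_assoc, hsx x, mul_assoc]

lemma commE11 {B : FM R s} (h : B * FM.mk 1 0 0 0 = FM.mk 1 0 0 0 * B) :
    B.b = 0 ∧ B.c = 0 := by
  constructor
  · have h1 := congrArg FM.b h
    change B.a * 0 + B.b * 0 = 1 * B.b + 0 * B.d at h1
    simpa using h1.symm
  · have h1 := congrArg FM.c h
    change B.c * 1 + B.d * 0 = 0 * B.a + 0 * B.c at h1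
    simpa using h1

lemma commE22 {B : FM R s} (h : B * FM.mk 0 0 0 1 = FM.mk 0 0 0 1 * B) :
    B.b = 0 ∧ B.c = 0 := by
  constructor
  · have h1 := congrArg FM.b h
    change B.a * 0 + B.b * 1 = 0 * B.b + 0 * B.d at h1
    simpa using h1
  · have h1 := congrArg FM.c h
    change B.c * 0 + B.d * 0 = 0 * B.a + 1 * B.c at h1
    simpa using h1.symm

lemma diag_isUnit {a d : R} (ha : IsUnit a) (hd : IsUnit d) :
    IsUnit (FM.mk a 0 0 d : FM R s) := by
  refine ⟨⟨_, FM.mk (↑ha.unit⁻¹) 0 0 (↑hd.unit⁻¹), ?_, ?_⟩, rfl⟩ <;>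
    ext <;>
    simp [ha.mul_val_inv, ha.val_inv_mul, hd.mul_val_inv, hd.val_inv_mul]

variable [IsLocalRing R]

/-- An idempotent all of whose entries are non-units is zero. -/
lemma idem_eq_zero {a b c d : R}
    (E1 : a * a + s * s * (b * c) = a) (E2 : a * b + b * d = b)
    (E3 : c * a + d * c = c) (E4 : s * s * (c * b) + d * d = d)
    (ha : ¬IsUnit a) (hb : ¬IsUnit b) (hc : ¬IsUnit c) (hd : ¬IsUnit d) :
    a = 0 ∧ b = 0 ∧ c = 0 ∧ d = 0 := by
  have hd1 : IsUnit (1 - d) := (lr_or d).resolve_left hd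
  set d' : R := ↑hd1.unit⁻¹ with hd'def
  have hdd' : (1 - d) * d' = 1 := hd1.mul_val_inv
  have hab : a * b = b * (1 - d) := by
    rw [mul_one_sub, eq_sub_of_add_eq E2]
  have hca : c * a = (1 - d) * c := by
    rw [one_sub_mul, eq_sub_of_add_eq E3]
  have h1 : a * (b * d') = b := by
    rw [← mul_assoc, hab, mul_assoc, hdd', mul_one]
  have h2 : (d' * c) * a = c := by
    rw [mul_assoc, hca, ← mul_assoc, hd1.val_inv_mul, one_mul]
  have hZ : a * ((b * d') * ((d' * c) * a)) = b * c := by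
    rw [← mul_assoc, h1, h2]
  have hat : a * (a + s * s * ((b * d') * ((d' * c) * a))) = a := by
    rw [mul_add, ← hmid, hZ, E1]
  have ht : ¬IsUnit (a + s * s * ((b * d') * ((d' * c) * a))) := by
    refine lr_add ha fun h => hb ?_
    exact lr_isUnit_left (lr_isUnit_left (lr_isUnit_right h))
  have h1t : IsUnit (1 - (a + s * s * ((b * d') * ((d' * c) * a)))) :=
    (lr_or _).resolve_left ht
  have ha0 : a = 0 := by
    have h3 : a * (1 - (a + s * s * ((b * d') * ((d' * c) * a)))) = 0 := by
      rw [mul_one_sub, hat, sub_self]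
    calc a = a * ((1 - (a + s * s * ((b * d') * ((d' * c) * a)))) * ↑h1t.unit⁻¹) := by
          rw [h1t.mul_val_inv, mul_one]
      _ = (a * (1 - (a + s * s * ((b * d') * ((d' * c) * a))))) * ↑h1t.unit⁻¹ :=
          (mul_assoc _ _ _).symm
      _ = 0 := by rw [h3, zero_mul]
  have hb0 : b = 0 := by
    have h4 : b * (1 - d) = 0 := by rw [← hab, ha0, zero_mul]
    calc b = b * ((1 - d) * d') := by rw [hdd', mul_one]
      _ = (b * (1 - d)) * d' := (mul_assoc _ _ _).symm
      _ = 0 := by rw [h4, zero_mul]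
  have hc0 : c = 0 := by rw [← h2, ha0, mul_zero]
  have hd0 : d = 0 := by
    have h5 : d * (1 - d) = 0 := by
      have := E4
      rw [hc0, zero_mul, mul_zero, zero_add] at this
      rw [mul_one_sub, this, sub_self]
    calc d = d * ((1 - d) * d') := by rw [hdd', mul_one]
      _ = (d * (1 - d)) * d' := (mul_assoc _ _ _).symm
      _ = 0 := by rw [h5, zero_mul]
  exact ⟨ha0, hb0, hc0, hd0⟩

end FM

namespace FM

variable {R : Type*} [Ring R] {s : R} [hs : Fact (∀ x : R, s * x = x * s)]
variable [IsLocalRing R]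

/-- Case `e.a` unit, `1 - e.d` unit: conjugate to a diagonal matrix. -/
lemma caseA (A : FM R s) {a b c d : R}
    (E1 : a * a + s * s * (b * c) = a) (E2 : a * b + b * d = b)
    (E3 : c * a + d * c = c) (E4 : s * s * (c * b) + d * d = d)
    (hcomm : A * FM.mk a b c d = FM.mk a b c d * A)
    (ha : IsUnit a) (hd : IsUnit (1 - d)) :
    ∃ x y : R, ∃ u : (FM R s)ˣ,
      ((u⁻¹ : (FM R s)ˣ) : FM R s) * A * (u : FM R s) = FM.mk x 0 0 y := by
  set a' : R := ↑ha.unit⁻¹ with ha'def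
  set d' : R := ↑hd.unit⁻¹ with hd'def
  have haa' : a * a' = 1 := ha.mul_val_inv
  have ha'a : a' * a = 1 := ha.val_inv_mul
  have hdd' : (1 - d) * d' = 1 := hd.mul_val_inv
  have hd'd : d' * (1 - d) = 1 := hd.val_inv_mul
  have hbc : s * s * (b * c) = a - a * a := eq_sub_of_add_eq' E1
  have hcb : s * s * (c * b) = d - d * d := eq_sub_of_add_eq E4
  have hab : a * b = b * (1 - d) := by rw [mul_one_sub, eq_sub_of_add_eq E2]
  have hca : c * a = (1 - d) * c := by rw [one_sub_mul, eq_sub_of_add_eq E3]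
  have h1 : a * (b * d') = b := by rw [← mul_assoc, hab, mul_assoc, hdd', mul_one]
  have h2 : (d' * c) * a = c := by rw [mul_assoc, hca, ← mul_assoc, hd'd, one_mul]
  have hbd' : b * d' = a' * b := by
    calc b * d' = (a' * a) * (b * d') := by rw [ha'a, one_mul]
      _ = a' * (a * (b * d')) := by rw [mul_assoc]
      _ = a' * b := by rw [h1]
  have hd'c : d' * c = c * a' := by
    calc d' * c = ((d' * c) * a) * a' := by rw [mul_assoc (d' * c) a a', haa', mul_one]
      _ = c * a' := by rw [h2]
  set e : FM R s := FM.mk a b c d with hedef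
  set f : FM R s := FM.mk 1 0 0 0 with hfdef
  set v : FM R s := FM.mk a b (-c) (1 - d) with hvdef
  set w : FM R s := FM.mk 1 (-(b * d')) (c * a') 1 with hwdef
  have hvw : v * w = 1 := by
    ext
    · show a * 1 + s * s * (b * (c * a')) = 1
      have t1 : s * s * (b * (c * a')) = 1 - a := by
        rw [← mul_assoc b c a', ← mul_assoc (s * s) (b * c) a', hbc, sub_mul,
          mul_assoc a a a', haa', mul_one]
      rw [t1, mul_one]; abel
    · show a * (-(b * d')) + b * 1 = 0
      rw [mul_neg, h1, mul_one, neg_add_cancel]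
    · show (-c) * 1 + (1 - d) * (c * a') = 0
      rw [mul_one, ← mul_assoc, ← hca, mul_assoc, haa', mul_one, neg_add_cancel]
    · show s * s * ((-c) * (-(b * d'))) + (1 - d) * 1 = 1
      have t2 : s * s * ((-c) * (-(b * d'))) = d := by
        rw [neg_mul_neg, ← mul_assoc c b d', ← mul_assoc (s * s) (c * b) d', hcb,
          show d - d * d = d * (1 - d) from (mul_one_sub d d).symm, mul_assoc, hdd',
          mul_one]
      rw [t2, mul_one]; abel
  have hwv : w * v = 1 := by
    ext
    · show 1 * a + s * s * ((-(b * d')) * (-c)) = 1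
      have t1 : s * s * ((-(b * d')) * (-c)) = 1 - a := by
        rw [neg_mul_neg, hbd', mul_assoc a' b c, hmid, hbc, mul_sub, ← mul_assoc,
          ha'a, one_mul]
      rw [t1, one_mul]; abel
    · show 1 * b + (-(b * d')) * (1 - d) = 0
      rw [one_mul, neg_mul, mul_assoc, hd'd, mul_one, add_neg_cancel]
    · show (c * a') * a + 1 * (-c) = 0
      rw [mul_assoc, ha'a, mul_one, one_mul, add_neg_cancel]
    · show s * s * ((c * a') * b) + 1 * (1 - d) = 1
      have t2 : s * s * ((c * a') * b) = d := by
        rw [mul_assoc c a' b, ← hbd', ← mul_assoc c b d',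
          ← mul_assoc (s * s) (c * b) d', hcb,
          show d - d * d = d * (1 - d) from (mul_one_sub d d).symm, mul_assoc, hdd',
          mul_one]
      rw [t2, one_mul]; abel
  have hve : v * e = f * v := by
    ext
    · show a * a + s * s * (b * c) = 1 * a + s * s * (0 * (-c))
      rw [E1, zero_mul, mul_zero, add_zero, one_mul]
    · show a * b + b * d = 1 * b + 0 * (1 - d)
      rw [E2, zero_mul, add_zero, one_mul]
    · show (-c) * a + (1 - d) * c = 0 * a + 0 * (-c)
      rw [neg_mul, ← hca, neg_add_cancel, zero_mul, zero_mul, add_zero]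
    · show s * s * ((-c) * b) + (1 - d) * d = s * s * (0 * b) + 0 * (1 - d)
      rw [neg_mul, mul_neg, hcb, one_sub_mul, neg_add_cancel, zero_mul, zero_mul,
        mul_zero, add_zero]
  have hwf : w * f = e * w := by
    calc w * f = w * f * (v * w) := by rw [hvw, mul_one]
      _ = (w * (f * v)) * w := by rw [← mul_assoc, mul_assoc w f v]
      _ = (w * (v * e)) * w := by rw [← hve]
      _ = ((w * v) * e) * w := by rw [← mul_assoc w v e]
      _ = e * w := by rw [hwv, one_mul]
  have hBf : (v * A * w) * f = f * (v * A * w) := by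
    calc (v * A * w) * f = v * A * (w * f) := by rw [mul_assoc]
      _ = v * (A * e) * w := by rw [hwf, ← mul_assoc, mul_assoc v A e]
      _ = v * (e * A) * w := by rw [hcomm]
      _ = (v * e) * (A * w) := by rw [← mul_assoc, mul_assoc (v * e) A w]
      _ = f * (v * A * w) := by rw [hve, mul_assoc, ← mul_assoc v A w, ← mul_assoc]
  obtain ⟨hb0, hc0⟩ : (v * A * w).b = 0 ∧ (v * A * w).c = 0 := commE11 hBf
  refine ⟨(v * A * w).a, (v * A * w).d, (⟨v, w, hvw, hwv⟩ : (FM R s)ˣ)⁻¹, ?_⟩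
  have hcoe : (((⟨v, w, hvw, hwv⟩ : (FM R s)ˣ)⁻¹)⁻¹ : (FM R s)ˣ) = ⟨v, w, hvw, hwv⟩ :=
    inv_inv _
  rw [hcoe]
  show v * A * w = FM.mk (v * A * w).a 0 0 (v * A * w).d
  ext
  · rfl
  · exact hb0
  · exact hc0
  · rfl

end FM

namespace FM

variable {R : Type*} [Ring R] {s : R} [hs : Fact (∀ x : R, s * x = x * s)]
variable [IsLocalRing R]

/-- Case `1 - e.a` unit, `e.d` unit: conjugate to a diagonal matrix. -/
lemma caseB (A : FM R s) {a b c d : R}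
    (E1 : a * a + s * s * (b * c) = a) (E2 : a * b + b * d = b)
    (E3 : c * a + d * c = c) (E4 : s * s * (c * b) + d * d = d)
    (hcomm : A * FM.mk a b c d = FM.mk a b c d * A)
    (ha : IsUnit (1 - a)) (hd : IsUnit d) :
    ∃ x y : R, ∃ u : (FM R s)ˣ,
      ((u⁻¹ : (FM R s)ˣ) : FM R s) * A * (u : FM R s) = FM.mk x 0 0 y := by
  set a' : R := ↑ha.unit⁻¹ with ha'def
  set d' : R := ↑hd.unit⁻¹ with hd'def
  have haa' : (1 - a) * a' = 1 := ha.mul_val_inv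
  have ha'a : a' * (1 - a) = 1 := ha.val_inv_mul
  have hdd' : d * d' = 1 := hd.mul_val_inv
  have hd'd : d' * d = 1 := hd.val_inv_mul
  have hbc : s * s * (b * c) = a - a * a := eq_sub_of_add_eq' E1
  have hcb : s * s * (c * b) = d - d * d := eq_sub_of_add_eq E4
  have hbc2 : s * s * (b * c) = a * (1 - a) := by rw [hbc, mul_one_sub]
  have hbc3 : s * s * (b * c) = (1 - a) * a := by rw [hbc, one_sub_mul]
  have hab : (1 - a) * b = b * d := by
    rw [one_sub_mul, eq_sub_of_add_eq' E2]
  have hca : c * (1 - a) = d * c := by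
    rw [mul_one_sub, eq_sub_of_add_eq' E3]
  have h1 : (1 - a) * (b * d') = b := by
    rw [← mul_assoc, hab, mul_assoc, hdd', mul_one]
  have h2 : (d' * c) * (1 - a) = c := by
    rw [mul_assoc, hca, ← mul_assoc, hd'd, one_mul]
  have hbd' : b * d' = a' * b := by
    calc b * d' = (a' * (1 - a)) * (b * d') := by rw [ha'a, one_mul]
      _ = a' * ((1 - a) * (b * d')) := by rw [mul_assoc]
      _ = a' * b := by rw [h1]
  have hcbd' : s * s * ((c * b) * d') = 1 - d := by
    rw [← mul_assoc (s * s) (c * b) d', hcb,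
      show d - d * d = (1 - d) * d from by rw [one_sub_mul], mul_assoc, hdd', mul_one]
  set e : FM R s := FM.mk a b c d with hedef
  set f : FM R s := FM.mk 0 0 0 1 with hfdef
  set v : FM R s := FM.mk (1 - a) (-b) c d with hvdef
  set w : FM R s := FM.mk 1 (b * d') (-(c * a')) 1 with hwdef
  have hvw : v * w = 1 := by
    ext
    · show (1 - a) * 1 + s * s * ((-b) * (-(c * a'))) = 1
      have t1 : s * s * ((-b) * (-(c * a'))) = a := by
        rw [neg_mul_neg, ← mul_assoc b c a', ← mul_assoc (s * s) (b * c) a', hbc2,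
          mul_assoc a (1 - a) a', haa', mul_one]
      rw [t1, mul_one]; abel
    · show (1 - a) * (b * d') + (-b) * 1 = 0
      rw [h1, mul_one, add_neg_cancel]
    · show c * 1 + d * (-(c * a')) = 0
      rw [mul_one, mul_neg, ← mul_assoc d c a', ← hca, mul_assoc, haa', mul_one,
        add_neg_cancel]
    · show s * s * (c * (b * d')) + d * 1 = 1
      rw [← mul_assoc c b d', hcbd', mul_one]; abel
  have hwv : w * v = 1 := by
    ext
    · show 1 * (1 - a) + s * s * ((b * d') * c) = 1
      have t1 : s * s * ((b * d') * c) = a := by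
        rw [hbd', mul_assoc a' b c, hmid, hbc3, ← mul_assoc, ha'a, one_mul]
      rw [t1, one_mul]; abel
    · show 1 * (-b) + (b * d') * d = 0
      rw [one_mul, mul_assoc, hd'd, mul_one, neg_add_cancel]
    · show (-(c * a')) * (1 - a) + 1 * c = 0
      rw [neg_mul, mul_assoc, ha'a, mul_one, one_mul, neg_add_cancel]
    · show s * s * ((-(c * a')) * (-b)) + 1 * d = 1
      rw [neg_mul_neg, mul_assoc c a' b, ← hbd', ← mul_assoc c b d', hcbd', one_mul]
      abel
  have hve : v * e = f * v := by
    ext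
    · show (1 - a) * a + s * s * ((-b) * c) = 0 * (1 - a) + s * s * (0 * c)
      rw [one_sub_mul, neg_mul, mul_neg, hbc, add_neg_cancel, zero_mul, zero_mul,
        mul_zero, add_zero]
    · show (1 - a) * b + (-b) * d = 0 * (-b) + 0 * d
      rw [hab, neg_mul, add_neg_cancel, zero_mul, zero_mul, add_zero]
    · show c * a + d * c = 0 * (1 - a) + 1 * c
      rw [E3, zero_mul, one_mul, zero_add]
    · show s * s * (c * b) + d * d = s * s * (0 * (-b)) + 1 * d
      rw [E4, zero_mul, mul_zero, zero_add, one_mul]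
  have hwf : w * f = e * w := by
    calc w * f = w * f * (v * w) := by rw [hvw, mul_one]
      _ = (w * (f * v)) * w := by rw [← mul_assoc, mul_assoc w f v]
      _ = (w * (v * e)) * w := by rw [← hve]
      _ = ((w * v) * e) * w := by rw [← mul_assoc w v e]
      _ = e * w := by rw [hwv, one_mul]
  have hBf : (v * A * w) * f = f * (v * A * w) := by
    calc (v * A * w) * f = v * A * (w * f) := by rw [mul_assoc]
      _ = v * (A * e) * w := by rw [hwf, ← mul_assoc, mul_assoc v A e]
      _ = v * (e * A) * w := by rw [hcomm]
      _ = (v * e) * (A * w) := by rw [← mul_assoc, mul_assoc (v * e) A w]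
      _ = f * (v * A * w) := by rw [hve, mul_assoc, ← mul_assoc v A w, ← mul_assoc]
  obtain ⟨hb0, hc0⟩ : (v * A * w).b = 0 ∧ (v * A * w).c = 0 := commE22 hBf
  refine ⟨(v * A * w).a, (v * A * w).d, (⟨v, w, hvw, hwv⟩ : (FM R s)ˣ)⁻¹, ?_⟩
  have hcoe : (((⟨v, w, hvw, hwv⟩ : (FM R s)ˣ)⁻¹)⁻¹ : (FM R s)ˣ) = ⟨v, w, hvw, hwv⟩ :=
    inv_inv _
  rw [hcoe]
  show v * A * w = FM.mk (v * A * w).a 0 0 (v * A * w).d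
  ext
  · rfl
  · exact hb0
  · exact hc0
  · rfl

end FM


theorem stmt14 {R : Type*} [Ring R] [IsLocalRing R] (s : R)
    [Fact (∀ x : R, s * x = x * s)] (A : FM R s) :
    IsStronglyClean A ↔
      IsUnit A ∨ IsUnit (1 - A) ∨
        ∃ a b : R, ∃ u : (FM R s)ˣ,
          ((u⁻¹ : (FM R s)ˣ) : FM R s) * A * (u : FM R s) = FM.mk a 0 0 b := by
  constructor
  · rintro ⟨e, he, hcomm, hU⟩
    have he' : e * e = e := he
    have E1 : e.a * e.a + s * s * (e.b * e.c) = e.a := congrArg FM.a he'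
    have E2 : e.a * e.b + e.b * e.d = e.b := congrArg FM.b he'
    have E3 : e.c * e.a + e.d * e.c = e.c := congrArg FM.c he'
    have E4 : s * s * (e.c * e.b) + e.d * e.d = e.d := congrArg FM.d he'
    have hemk : e = FM.mk e.a e.b e.c e.d := rfl
    by_cases ha : IsUnit e.a
    · by_cases hd1 : IsUnit (1 - e.d)
      · exact Or.inr (Or.inr (FM.caseA A E1 E2 E3 E4 (hemk ▸ hcomm) ha hd1))
      · by_cases ha1 : IsUnit (1 - e.a)
        · have hd : IsUnit e.d := (lr_or e.d).resolve_right hd1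
          exact Or.inr (Or.inr (FM.caseB A E1 E2 E3 E4 (hemk ▸ hcomm) ha1 hd))
        · -- here e = 1
          have hb : ¬IsUnit e.b := by
            intro h
            obtain ⟨ub, hub⟩ := h
            apply hd1
            have heq : e.b * (1 - e.d) = e.a * e.b := by
              rw [mul_one_sub, eq_sub_of_add_eq E2]
            have : (1 - e.d) = ↑ub⁻¹ * (e.a * e.b) := by
              rw [← heq, ← hub, ← mul_assoc, Units.inv_mul, one_mul]
            rw [this, ← hub]
            exact (Units.isUnit ub⁻¹).mul (ha.mul ub.isUnit)
          have hc : ¬IsUnit e.c := by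
            intro h
            obtain ⟨uc, huc⟩ := h
            apply hd1
            have heq : (1 - e.d) * e.c = e.c * e.a := by
              rw [one_sub_mul, eq_sub_of_add_eq E3]
            have : (1 - e.d) = (e.c * e.a) * ↑uc⁻¹ := by
              rw [← heq, mul_assoc, ← huc, Units.mul_inv, mul_one]
            rw [this, ← huc]
            exact (uc.isUnit.mul ha).mul (Units.isUnit uc⁻¹)
          have h1e : (1 - e) * (1 - e) = 1 - e := (he.one_sub : IsIdempotentElem (1 - e))
          have hsub : (1 : FM R s) - e = FM.mk (1 - e.a) (-e.b) (-e.c) (1 - e.d) := by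
            ext <;> simp
          rw [hsub] at h1e
          have F1 : (1 - e.a) * (1 - e.a) + s * s * ((-e.b) * (-e.c)) = 1 - e.a :=
            congrArg FM.a h1e
          have F2 : (1 - e.a) * (-e.b) + (-e.b) * (1 - e.d) = -e.b := congrArg FM.b h1e
          have F3 : (-e.c) * (1 - e.a) + (1 - e.d) * (-e.c) = -e.c := congrArg FM.c h1e
          have F4 : s * s * ((-e.c) * (-e.b)) + (1 - e.d) * (1 - e.d) = 1 - e.d :=
            congrArg FM.d h1e
          have hbn : ¬IsUnit (-e.b) := fun h => hb (by simpa using h.neg)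
          have hcn : ¬IsUnit (-e.c) := fun h => hc (by simpa using h.neg)
          obtain ⟨z1, z2, z3, z4⟩ := FM.idem_eq_zero F1 F2 F3 F4 ha1 hbn hcn hd1
          have he1 : e = 1 := by
            ext
            · exact (sub_eq_zero.mp z1).symm
            · simpa using z2
            · simpa using z3
            · exact (sub_eq_zero.mp z4).symm
          rw [he1] at hU
          refine Or.inr (Or.inl ?_)
          rw [← neg_sub]
          exact hU.neg
    · have ha1 : IsUnit (1 - e.a) := (lr_or e.a).resolve_left ha
      by_cases hd : IsUnit e.d
      · exact Or.inr (Or.inr (FM.caseB A E1 E2 E3 E4 (hemk ▸ hcomm) ha1 hd))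
      · -- here e = 0
        have hb : ¬IsUnit e.b := by
          intro h
          obtain ⟨ub, hub⟩ := h
          apply hd
          have heq : (1 - e.a) * e.b = e.b * e.d := by
            rw [one_sub_mul, eq_sub_of_add_eq' E2]
          have : e.d = ↑ub⁻¹ * ((1 - e.a) * e.b) := by
            rw [heq, ← hub, ← mul_assoc, Units.inv_mul, one_mul]
          rw [this, ← hub]
          exact (Units.isUnit ub⁻¹).mul (ha1.mul ub.isUnit)
        have hc : ¬IsUnit e.c := by
          intro h
          obtain ⟨uc, huc⟩ := h
          apply ha
          have hd1 : IsUnit (1 - e.d) := (lr_or e.d).resolve_left hd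
          have heq : e.c * e.a = (1 - e.d) * e.c := by
            rw [one_sub_mul, eq_sub_of_add_eq E3]
          have : e.a = ↑uc⁻¹ * ((1 - e.d) * e.c) := by
            rw [← heq, ← huc, ← mul_assoc, Units.inv_mul, one_mul]
          rw [this, ← huc]
          exact (Units.isUnit uc⁻¹).mul (hd1.mul uc.isUnit)
        obtain ⟨z1, z2, z3, z4⟩ := FM.idem_eq_zero E1 E2 E3 E4 ha hb hc hd
        have he0 : e = 0 := by
          ext
          exacts [z1, z2, z3, z4]
        rw [he0, sub_zero] at hU
        exact Or.inl hU
  · have pick : ∀ x : R, ∃ ε : R, ε * ε = ε ∧ x * ε = ε * x ∧ IsUnit (x - ε) := by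
      intro x
      rcases lr_or x with h | h
      · exact ⟨0, by simp, by simp, by simpa using h⟩
      · exact ⟨1, by simp, by simp, by rw [← neg_sub]; exact h.neg⟩
    rintro (h | h | ⟨a, b, u, hu⟩)
    · exact ⟨0, by simp [IsIdempotentElem], by rw [mul_zero, zero_mul],
        by simpa using h⟩
    · refine ⟨1, by simp [IsIdempotentElem], by rw [mul_one, one_mul], ?_⟩
      rw [show A - 1 = -(1 - A) from by abel]
      exact h.neg
    · obtain ⟨e1, he1, hc1, hu1⟩ := pick a
      obtain ⟨e2, he2, hc2, hu2⟩ := pick b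
      set D : FM R s := FM.mk a 0 0 b with hDdef
      set E0 : FM R s := FM.mk e1 0 0 e2 with hE0def
      have hA : A = ↑u * D * ↑u⁻¹ := by
        rw [← hu, ← mul_assoc, Units.mul_inv_cancel_right, Units.mul_inv_cancel_left]
      have hE0idem : E0 * E0 = E0 := by
        ext <;> simp [hE0def, he1, he2]
      have hDE : D * E0 = E0 * D := by
        ext <;> simp [hDdef, hE0def, hc1, hc2]
      have hDU : IsUnit (D - E0) := by
        have : D - E0 = FM.mk (a - e1) 0 0 (b - e2) := by
          ext <;> simp [hDdef, hE0def]
        rw [this]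
        exact FM.diag_isUnit hu1 hu2
      have key : ∀ X Y : FM R s,
          (↑u * X * ↑u⁻¹) * (↑u * Y * ↑u⁻¹) = ↑u * (X * Y) * ↑u⁻¹ := by
        intro X Y
        calc (↑u * X * ↑u⁻¹) * (↑u * Y * ↑u⁻¹)
            = ↑u * X * (↑u⁻¹ * (↑u * (Y * ↑u⁻¹))) := by
              rw [mul_assoc, mul_assoc (↑u : FM R s) Y]
          _ = ↑u * X * (Y * ↑u⁻¹) := by rw [Units.inv_mul_cancel_left]
          _ = (↑u * X * Y) * ↑u⁻¹ := by rw [← mul_assoc]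
          _ = ↑u * (X * Y) * ↑u⁻¹ := by rw [mul_assoc (↑u : FM R s) X Y]
      refine ⟨↑u * E0 * ↑u⁻¹, ?_, ?_, ?_⟩
      · show (↑u * E0 * ↑u⁻¹) * (↑u * E0 * ↑u⁻¹) = ↑u * E0 * ↑u⁻¹
        rw [key, hE0idem]
      · rw [hA, key, key, hDE]
      · have hsplit : A - ↑u * E0 * ↑u⁻¹ = ↑u * (D - E0) * ↑u⁻¹ := by
          rw [hA, mul_sub, sub_mul]
        rw [hsplit]
        exact (u.isUnit.mul hDU).mul (Units.isUnit u⁻¹)
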